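/- Let B be a symmetric real 3×3 matrix with eigenvalues λ₁, λ₂, λ₃ (with multiplicity). Then the symmetric bilinear form (ξ, ζ) ↦ (1/2)·Tr((ξ·ζ + ζ·ξ)·B) on the space of skew-symmetric real 3×3 matrices is nondegenerate (i.e. if ξ is skew-symmetric and Tr((ξ·ζ + ζ·ξ)·B) = 0 for all skew-symmetric ζ, then ξ = 0) if and only if λ₁+λ₂ ≠ 0, λ₁+λ₃ ≠ 0 and λ₂+λ₃ ≠ 0. -/

import Mathlib

open Matrix Polynomial

def hat (u : Fin 3 → ℝ) : Matrix (Fin 3) (Fin 3) ℝ :=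
  !![0, -u 2, u 1; u 2, 0, -u 0; -u 1, u 0, 0]

lemma hat_skew (u : Fin 3 → ℝ) : (hat u)ᵀ = -(hat u) := by
  ext i j; fin_cases i <;> fin_cases j <;> simp [hat]

lemma hat_eq_zero {u : Fin 3 → ℝ} (h : hat u = 0) : u = 0 := by
  funext i
  fin_cases i
  · simpa [hat] using congrFun (congrFun h 1) 2
  · exact congrFun (congrFun h 0) 2
  · exact neg_eq_zero.mp (congrFun (congrFun h 0) 1)

lemma skew_eq_hat {ξ : Matrix (Fin 3) (Fin 3) ℝ} (hξ : ξᵀ = -ξ) :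
    ξ = hat ![-ξ 1 2, ξ 0 2, -ξ 0 1] := by
  have h := fun i j => congrFun (congrFun hξ i) j
  simp only [transpose_apply, Matrix.neg_apply] at h
  ext i j
  fin_cases i <;> fin_cases j <;>
    simp [hat] <;> linarith [h 0 0, h 1 1, h 2 2, h 0 1, h 0 2, h 1 2]

lemma key_identity (B : Matrix (Fin 3) (Fin 3) ℝ) (hsymm : Bᵀ = B) (u v : Fin 3 → ℝ) :
    Matrix.trace ((hat u * hat v + hat v * hat u) * B) =
      2 * (v ⬝ᵥ ((B - (Matrix.trace B) • 1) *ᵥ u)) := by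
  have h := fun i j => congrFun (congrFun hsymm i) j
  simp only [transpose_apply] at h
  have h10 : B 1 0 = B 0 1 := (h 1 0).symm
  have h20 : B 2 0 = B 0 2 := (h 2 0).symm
  have h21 : B 2 1 = B 1 2 := (h 2 1).symm
  simp [hat, Matrix.trace, Matrix.mul_apply, dotProduct, mulVec, Matrix.sub_apply,
    Matrix.smul_apply, Matrix.one_apply, vecMul, Fin.sum_univ_succ, Matrix.diag_apply, h10, h20, h21]
  ring

lemma scalar_eq_smul_one (t : ℝ) : Matrix.scalar (Fin 3) t = t • (1 : Matrix (Fin 3) (Fin 3) ℝ) := by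
  ext i j
  by_cases h : i = j <;> simp [Matrix.scalar_apply, Matrix.one_apply, Matrix.diagonal_apply, h]

lemma eval_charpoly' (M : Matrix (Fin 3) (Fin 3) ℝ) (t : ℝ) :
    M.charpoly.eval t = (t • (1 : Matrix (Fin 3) (Fin 3) ℝ) - M).det := by
  rw [Matrix.charpoly, _root_.eval_det, matPolyEquiv_charmatrix, eval_sub, eval_X, eval_C,
    scalar_eq_smul_one]

lemma trace_eq (B : Matrix (Fin 3) (Fin 3) ℝ) (lam₁ lam₂ lam₃ : ℝ)
    (hchar : B.charpoly = (X - C lam₁) * (X - C lam₂) * (X - C lam₃)) :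
    Matrix.trace B = lam₁ + lam₂ + lam₃ := by
  have hexp : (X - C lam₁) * (X - C lam₂) * (X - C lam₃) =
      X ^ 3 - C (lam₁ + lam₂ + lam₃) * X ^ 2
        + C (lam₁ * lam₂ + lam₁ * lam₃ + lam₂ * lam₃) * X - C (lam₁ * lam₂ * lam₃) := by
    simp only [C_add, C_mul]; ring
  have h := Matrix.trace_eq_neg_charpoly_coeff B
  rw [hchar, hexp] at h
  simpa [coeff_sub, coeff_add, add_mul, coeff_C_mul, coeff_X_pow, coeff_C,
    show Fintype.card (Fin 3) - 1 = 2 from rfl] using h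

lemma hat_zero : hat 0 = 0 := by
  ext i j; fin_cases i <;> fin_cases j <;> simp [hat, vecHead, vecTail]

/-- The Hessian bilinear form is nondegenerate iff no two eigenvalues of B sum to zero. -/
theorem hessian_nondegenerate_iff (B : Matrix (Fin 3) (Fin 3) ℝ) (hsymm : Bᵀ = B)
    (lam₁ lam₂ lam₃ : ℝ)
    (hchar : B.charpoly = (X - C lam₁) * (X - C lam₂) * (X - C lam₃)) :
    (∀ ξ : Matrix (Fin 3) (Fin 3) ℝ, ξᵀ = -ξ →
        (∀ ζ : Matrix (Fin 3) (Fin 3) ℝ, ζᵀ = -ζ →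
          Matrix.trace ((ξ * ζ + ζ * ξ) * B) = 0) → ξ = 0) ↔
    (lam₁ + lam₂ ≠ 0 ∧ lam₁ + lam₃ ≠ 0 ∧ lam₂ + lam₃ ≠ 0) := by
  set S : Matrix (Fin 3) (Fin 3) ℝ := B - (Matrix.trace B) • 1 with hS
  have htr := trace_eq B lam₁ lam₂ lam₃ hchar
  have hdet : S.det = -((lam₂ + lam₃) * (lam₁ + lam₃) * (lam₁ + lam₂)) := by
    have h1 : (Matrix.trace B • (1 : Matrix (Fin 3) (Fin 3) ℝ) - B).det
        = (lam₂ + lam₃) * (lam₁ + lam₃) * (lam₁ + lam₂) := by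
      rw [← eval_charpoly', hchar]
      simp only [eval_mul, eval_sub, eval_X, eval_C, htr]
      ring
    have h2 : S = -(Matrix.trace B • (1 : Matrix (Fin 3) (Fin 3) ℝ) - B) := by
      rw [hS, neg_sub]
    rw [h2, Matrix.det_neg, h1]
    norm_num
  constructor
  · intro hnd
    have hne : S.det ≠ 0 := by
      intro h0
      obtain ⟨u, hu, hSu⟩ := (Matrix.exists_mulVec_eq_zero_iff).mpr h0
      have hz : hat u = 0 := by
        refine hnd (hat u) (hat_skew u) (fun ζ hζ => ?_)
        rw [skew_eq_hat hζ, key_identity B hsymm u _, ← hS, hSu]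
        simp
      exact hu (hat_eq_zero hz)
    rw [hdet] at hne
    refine ⟨fun h => hne ?_, fun h => hne ?_, fun h => hne ?_⟩ <;> rw [h] <;> ring
  · rintro ⟨h12, h13, h23⟩ ξ hξ hp
    set u : Fin 3 → ℝ := ![-ξ 1 2, ξ 0 2, -ξ 0 1] with hu
    have hxu : ξ = hat u := skew_eq_hat hξ
    have hSu : S *ᵥ u = 0 := by
      have hall : ∀ v, v ⬝ᵥ (S *ᵥ u) = 0 := by
        intro v
        have h := hp (hat v) (hat_skew v)
        rw [hxu, key_identity B hsymm u v, ← hS] at h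
        linarith
      exact dotProduct_self_eq_zero.mp (hall (S *ᵥ u))
    have hdne : S.det ≠ 0 := by
      rw [hdet]
      exact neg_ne_zero.mpr (mul_ne_zero (mul_ne_zero h23 h13) h12)
    have hu0 : u = 0 := by
      by_contra h0
      exact hdne (Matrix.exists_mulVec_eq_zero_iff.mp ⟨u, h0, hSu⟩)
    rw [hxu, hu0, hat_zero]
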